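/- Asymptotics of the Gamma-ratio sum, case 2λμ = 1 (Lemma 6, second case): Let λ > 0 and μ > 0 with λμ = 1/2. Then lim_{i→∞} (1/log i) ∑_{j=1}^{i−1} ( Γ(j) / Γ(j + 1/2) )² = 1. -/

import Mathlib

open Filter Topology

/-- Log-convexity of Gamma at the midpoint of `x` and `x+1`. -/
lemma gamma_half_sq_le (x : ℝ) (hx : 0 < x) :
    Real.Gamma (x + 1 / 2) ^ 2 ≤ Real.Gamma x * Real.Gamma (x + 1) := by
  have hx1 : (0 : ℝ) < x + 1 := by linarith
  have hxh : (0 : ℝ) < x + 1 / 2 := by linarith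
  have hc := Real.convexOn_log_Gamma.2 (Set.mem_Ioi.2 hx) (Set.mem_Ioi.2 hx1)
    (by norm_num : (0:ℝ) ≤ 1/2) (by norm_num : (0:ℝ) ≤ 1/2) (by norm_num)
  have harg : (1/2 : ℝ) • x + (1/2 : ℝ) • (x + 1) = x + 1/2 := by
    simp [smul_eq_mul]; ring
  rw [harg] at hc
  have hc2 : 2 * Real.log (Real.Gamma (x + 1/2)) ≤
      Real.log (Real.Gamma x) + Real.log (Real.Gamma (x + 1)) := by
    simp only [Function.comp_apply, smul_eq_mul] at hc
    linarith
  have pA := Real.Gamma_pos_of_pos hx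
  have pB := Real.Gamma_pos_of_pos hx1
  have pC := Real.Gamma_pos_of_pos hxh
  have := Real.exp_le_exp.2 hc2
  rwa [two_mul, Real.exp_add, Real.exp_add, Real.exp_log pA, Real.exp_log pB,
    Real.exp_log pC, ← sq] at this

/-- Wendel's limit, squared form. -/
lemma tendsto_nat_mul_gamma_ratio_sq :
    Tendsto (fun n : ℕ => (n : ℝ) * (Real.Gamma (n : ℝ) / Real.Gamma ((n : ℝ) + 1 / 2)) ^ 2)
      atTop (𝓝 1) := by
  have hub : Tendsto (fun n : ℕ => ((n : ℝ) + 1 / 2) / (n : ℝ)) atTop (𝓝 1) := by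
    have h0 : Tendsto (fun n : ℕ => 1 + (1/2) * (1 / (n : ℝ))) atTop (𝓝 (1 + (1/2) * 0)) :=
      tendsto_const_nhds.add (tendsto_one_div_atTop_nhds_zero_nat.const_mul (1/2))
    rw [show (1 : ℝ) + (1/2) * 0 = 1 by norm_num] at h0
    apply h0.congr'
    filter_upwards [eventually_ge_atTop 1] with n hn
    have hn' : (0:ℝ) < (n:ℝ) := by exact_mod_cast hn
    field_simp
  refine tendsto_of_tendsto_of_tendsto_of_le_of_le' tendsto_const_nhds hub ?_ ?_
  · filter_upwards [eventually_ge_atTop 1] with n hn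
    have hn' : (0:ℝ) < (n:ℝ) := by exact_mod_cast hn
    have h1 := gamma_half_sq_le (n : ℝ) hn'
    rw [Real.Gamma_add_one hn'.ne'] at h1
    have pB := Real.Gamma_pos_of_pos (by linarith : (0:ℝ) < (n:ℝ) + 1/2)
    rw [div_pow, ← mul_div_assoc, le_div_iff₀ (pow_pos pB 2), one_mul]
    nlinarith
  · filter_upwards [eventually_ge_atTop 1] with n hn
    have hn' : (0:ℝ) < (n:ℝ) := by exact_mod_cast hn
    have h2 := gamma_half_sq_le ((n : ℝ) + 1/2) (by linarith)
    have e1 : (n:ℝ) + 1/2 + 1/2 = (n:ℝ) + 1 := by ring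
    have e2 : (n:ℝ) + 1/2 + 1 = ((n:ℝ) + 1/2) + 1 := by ring
    rw [e1, e2, Real.Gamma_add_one (by positivity : ((n:ℝ) + 1/2) ≠ 0),
      Real.Gamma_add_one hn'.ne'] at h2
    have pA := Real.Gamma_pos_of_pos hn'
    have pB := Real.Gamma_pos_of_pos (by linarith : (0:ℝ) < (n:ℝ) + 1/2)
    rw [div_pow, ← mul_div_assoc, div_le_div_iff₀ (pow_pos pB 2) hn']
    nlinarith

/-- **Asymptotics of the Gamma-ratio sum, case `2λμ = 1`** (Lemma 6, second case):
`lim_{i→∞} (1/log i) ∑_{j=1}^{i−1} (Γ(j)/Γ(j+1/2))² = 1`. -/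
theorem gamma_ratio_sum_asymptotics_eq (lam mu : ℝ) (hlam : 0 < lam) (hmu : 0 < mu)
    (h : lam * mu = 1 / 2) :
    Tendsto (fun i : ℕ => (1 / Real.log (i : ℝ)) *
        ∑ j ∈ Finset.Icc 1 (i - 1),
          (Real.Gamma (j : ℝ) / Real.Gamma ((j : ℝ) + 1 / 2)) ^ 2)
      atTop (𝓝 1) := by
  classical
  set b : ℕ → ℝ := fun j => (Real.Gamma (j : ℝ) / Real.Gamma ((j : ℝ) + 1 / 2)) ^ 2 with hb
  set g : ℕ → ℝ := fun n => (n : ℝ)⁻¹ with hg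
  set S : ℕ → ℝ := fun n => ∑ i ∈ Finset.range n, g i with hS
  set T : ℕ → ℝ := fun n => ∑ i ∈ Finset.range n, b i with hT
  -- the key limit
  have hnb := tendsto_nat_mul_gamma_ratio_sq
  -- S (n+1) = harmonic n
  have hSharm : ∀ n : ℕ, S (n + 1) = (harmonic n : ℝ) := by
    intro n
    show ∑ i ∈ Finset.range (n + 1), g i = (harmonic n : ℝ)
    rw [Finset.sum_range_succ']
    simp only [hg, Nat.cast_zero, inv_zero, add_zero]
    rw [harmonic]
    push_cast
    rfl
  -- log (n+1) → ∞
  have hlog1 : Tendsto (fun n : ℕ => Real.log ((n : ℝ) + 1)) atTop atTop :=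
    Real.tendsto_log_atTop.comp (tendsto_atTop_add_const_right _ 1 tendsto_natCast_atTop_atTop)
  -- S → ∞
  have hStop : Tendsto S atTop atTop := by
    rw [← tendsto_add_atTop_iff_nat 1]
    have : Tendsto (fun n : ℕ => (harmonic n : ℝ)) atTop atTop := by
      have := Real.tendsto_harmonic_sub_log_add_one.add_atTop hlog1
      apply this.congr
      intro n; ring
    exact this.congr fun n => (hSharm n).symm
  -- S n - log n → γ
  have hSsub : Tendsto (fun n : ℕ => S n - Real.log (n : ℝ)) atTop
      (𝓝 Real.eulerMascheroniConstant) := by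
    rw [← tendsto_add_atTop_iff_nat 1]
    apply Real.tendsto_harmonic_sub_log_add_one.congr
    intro n
    rw [hSharm n]
    push_cast
    ring
  -- S n / log n → 1
  have hSlog : Tendsto (fun n : ℕ => S n / Real.log (n : ℝ)) atTop (𝓝 1) := by
    have hlogtop : Tendsto (fun n : ℕ => Real.log (n : ℝ)) atTop atTop :=
      Real.tendsto_log_atTop.comp tendsto_natCast_atTop_atTop
    have h0 : Tendsto (fun n : ℕ => 1 + (S n - Real.log (n : ℝ)) / Real.log (n : ℝ))
        atTop (𝓝 (1 + 0)) := tendsto_const_nhds.add (hSsub.div_atTop hlogtop)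
    rw [add_zero] at h0
    apply h0.congr'
    filter_upwards [hlogtop.eventually_gt_atTop 0] with n hn
    field_simp
    ring
  -- b - g = o(g)
  have hfo : (fun n => b n - g n) =o[atTop] g := by
    rw [Asymptotics.isLittleO_iff_tendsto']
    · have h0 : Tendsto (fun n : ℕ => (n : ℝ) * b n - 1) atTop (𝓝 (1 - 1)) :=
        hnb.sub tendsto_const_nhds
      rw [sub_self] at h0
      apply h0.congr'
      filter_upwards [eventually_ge_atTop 1] with n hn
      have hn' : (0:ℝ) < (n:ℝ) := by exact_mod_cast hn
      rw [hg]
      field_simp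
    · filter_upwards [eventually_ge_atTop 1] with n hn h0
      have hn' : (0:ℝ) < (n:ℝ) := by exact_mod_cast hn
      exact absurd h0 (by simp [hg, hn'.ne'])
  have hgnn : 0 ≤ g := fun n => by positivity
  have ho := hfo.sum_range hgnn hStop
  -- T n / S n → 1
  have hTS : Tendsto (fun n => T n / S n) atTop (𝓝 1) := by
    have h0 : Tendsto (fun n => (T n - S n) / S n) atTop (𝓝 0) := by
      have := ho.tendsto_div_nhds_zero
      apply this.congr
      intro n
      rw [hT, hS, Finset.sum_sub_distrib]
    have h1 : Tendsto (fun n => (T n - S n) / S n + 1) atTop (𝓝 (0 + 1)) :=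
      h0.add tendsto_const_nhds
    rw [zero_add] at h1
    apply h1.congr'
    filter_upwards [hStop.eventually_gt_atTop 0] with n hn
    field_simp
    ring
  -- assemble
  have hmain : Tendsto (fun n : ℕ => (T n / S n) * (S n / Real.log (n : ℝ)))
      atTop (𝓝 (1 * 1)) := hTS.mul hSlog
  rw [mul_one] at hmain
  apply hmain.congr'
  have hlogtop : Tendsto (fun n : ℕ => Real.log (n : ℝ)) atTop atTop :=
    Real.tendsto_log_atTop.comp tendsto_natCast_atTop_atTop
  filter_upwards [hStop.eventually_gt_atTop 0, hlogtop.eventually_gt_atTop 0,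
    eventually_ge_atTop 1] with i hSi hli hi1
  have hTi : T i = ∑ j ∈ Finset.Icc 1 (i - 1), b j := by
    have h0i : 0 < i := hi1
    have hb0 : b 0 = 0 := by simp [hb, Real.Gamma_zero]
    show ∑ j ∈ Finset.range i, b j = _
    rw [Finset.range_eq_Ico, Finset.sum_eq_sum_Ico_succ_bot h0i, hb0, zero_add,
      show i = (i - 1) + 1 by omega, Finset.Ico_add_one_right_eq_Icc]
    simp
  rw [← hTi]
  field_simp
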